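/- Let L be a real symmetric n×n matrix, let W_k (k = 0,…,K) be real d×d matrices with W_kᵀ = −W_k, let ε > 0, and let J = I + ε·Σ_{k=0}^K (W_kᵀ ⊗ T_k(L)) be the layer-wise Jacobian of the Stable-ChebNet update X^{(l+1)} = X^{(l)} + ε·Σ_{k=0}^K T_k(L)·X^{(l)}·W_k. Then, writing A = Σ_{k=0}^K (W_kᵀ ⊗ T_k(L)), the ℓ2 operator norm of J satisfies ‖J‖ = √(1 + ε²·‖A‖²); in particular 1 ≤ ‖J‖ ≤ 1 + (ε²/2)·‖A‖², so ‖J‖ = 1 + O(ε²). -/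

import Mathlib

open Matrix
open scoped Kronecker

/-- Evaluation of the `k`-th Chebyshev polynomial of the first kind at a square matrix. -/
noncomputable def chebAt {n : ℕ} (L : Matrix (Fin n) (Fin n) ℝ) (k : ℕ) :
    Matrix (Fin n) (Fin n) ℝ :=
  Polynomial.aeval L (Polynomial.Chebyshev.T ℝ k)

/-- The ℓ2 operator norm of a real square matrix. -/
noncomputable def l2OpNorm {m : Type*} [Fintype m] [DecidableEq m]
    (M : Matrix m m ℝ) : ℝ :=
  ‖Matrix.toEuclideanCLM (𝕜 := ℝ) M‖

lemma aeval_transpose {n : ℕ} (M : Matrix (Fin n) (Fin n) ℝ) (p : Polynomial ℝ) :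
    (Polynomial.aeval M p)ᵀ = Polynomial.aeval Mᵀ p := by
  induction p using Polynomial.induction_on' with
  | add p q hp hq => simp [hp, hq]
  | monomial k a => simp [Polynomial.aeval_monomial, Matrix.transpose_smul, Matrix.transpose_pow,
      Algebra.algebraMap_eq_smul_one]

lemma op_norm_skew {m : Type*} [Fintype m] [Nonempty m]
    (T : EuclideanSpace ℝ m →L[ℝ] EuclideanSpace ℝ m)
    (hT : ∀ x, inner ℝ (T x) x = (0 : ℝ)) (ε : ℝ) (hε : 0 ≤ ε) :
    ‖1 + ε • T‖ = Real.sqrt (1 + ε ^ 2 * ‖T‖ ^ 2) := by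
  have key : ∀ x : EuclideanSpace ℝ m, ‖(1 + ε • T) x‖ ^ 2 = ‖x‖ ^ 2 + ε ^ 2 * ‖T x‖ ^ 2 := by
    intro x
    have h1 : (1 + ε • T) x = x + ε • T x := by simp
    rw [h1, norm_add_sq_real, real_inner_smul_right, real_inner_comm, hT x]
    simp [norm_smul, mul_pow]
  have hs : (0:ℝ) ≤ 1 + ε ^ 2 * ‖T‖ ^ 2 := by positivity
  -- attainment of the operator norm
  obtain ⟨x0, hx0⟩ : ∃ x : EuclideanSpace ℝ m, ‖x‖ = 1 := exists_norm_eq _ zero_le_one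
  obtain ⟨z, hz, hzmax⟩ := (isCompact_sphere (0 : EuclideanSpace ℝ m) 1).exists_isMaxOn
    ⟨x0, by simp [hx0]⟩ (Continuous.continuousOn (by continuity : Continuous fun x => ‖T x‖))
  have hznorm : ‖z‖ = 1 := by simpa using mem_sphere_zero_iff_norm.mp hz
  have hTz : ‖T z‖ = ‖T‖ := by
    apply le_antisymm
    · simpa [hznorm] using T.le_opNorm z
    · apply T.opNorm_le_bound (by positivity)
      intro y
      rcases eq_or_ne y 0 with rfl | hy
      · simp
      · have hyn : ‖y‖ ≠ 0 := norm_ne_zero_iff.mpr hy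
        have hmem : (‖y‖⁻¹ • y) ∈ Metric.sphere (0 : EuclideanSpace ℝ m) 1 := by
          simp [norm_smul, abs_of_nonneg (inv_nonneg.mpr (norm_nonneg y)), inv_mul_cancel₀ hyn]
        have := hzmax hmem
        simp only [Set.mem_setOf_eq, T.map_smul, norm_smul, norm_inv, norm_norm] at this
        calc ‖T y‖ = ‖y‖ * (‖y‖⁻¹ * ‖T y‖) := by field_simp
        _ ≤ ‖y‖ * ‖T z‖ := by
            apply mul_le_mul_of_nonneg_left _ (norm_nonneg y)
            simpa using this
        _ = ‖T z‖ * ‖y‖ := mul_comm _ _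
  apply le_antisymm
  · apply ContinuousLinearMap.opNorm_le_bound _ (Real.sqrt_nonneg _)
    intro x
    have h2 : ‖(1 + ε • T) x‖ ^ 2 ≤ (1 + ε ^ 2 * ‖T‖ ^ 2) * ‖x‖ ^ 2 := by
      rw [key x]
      have : ‖T x‖ ≤ ‖T‖ * ‖x‖ := T.le_opNorm x
      nlinarith [sq_nonneg ε, mul_le_mul this this (norm_nonneg (T x)) (mul_nonneg T.opNorm_nonneg (norm_nonneg x))]
    calc ‖(1 + ε • T) x‖ = Real.sqrt (‖(1 + ε • T) x‖ ^ 2) := by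
          rw [Real.sqrt_sq (norm_nonneg _)]
    _ ≤ Real.sqrt ((1 + ε ^ 2 * ‖T‖ ^ 2) * ‖x‖ ^ 2) := Real.sqrt_le_sqrt h2
    _ = Real.sqrt (1 + ε ^ 2 * ‖T‖ ^ 2) * ‖x‖ := by
        rw [Real.sqrt_mul hs, Real.sqrt_sq (norm_nonneg x)]
  · have h3 : ‖(1 + ε • T) z‖ = Real.sqrt (1 + ε ^ 2 * ‖T‖ ^ 2) := by
      rw [← Real.sqrt_sq (norm_nonneg ((1 + ε • T) z)), key z, hznorm, hTz]
      norm_num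
    calc Real.sqrt (1 + ε ^ 2 * ‖T‖ ^ 2) = ‖(1 + ε • T) z‖ := h3.symm
    _ ≤ ‖1 + ε • T‖ * ‖z‖ := (1 + ε • T).le_opNorm z
    _ = ‖1 + ε • T‖ := by rw [hznorm, mul_one]

/-- **Layer-wise stability of Stable-ChebNet.**
With `L` symmetric, each `W_k` antisymmetric, `ε > 0`, and
`A = ∑_{k=0}^K W_kᵀ ⊗ T_k(L)`, the Jacobian `J = I + ε A` of the Stable-ChebNet
update satisfies `‖J‖ = √(1 + ε² ‖A‖²)`, hence `1 ≤ ‖J‖ ≤ 1 + (ε²/2) ‖A‖²`. -/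
theorem stable_chebnet_layer_jacobian_norm (n d K : ℕ) (hn : 0 < n) (hd : 0 < d)
    (L : Matrix (Fin n) (Fin n) ℝ) (hL : Lᵀ = L)
    (W : ℕ → Matrix (Fin d) (Fin d) ℝ) (hW : ∀ k ≤ K, (W k)ᵀ = -W k)
    (ε : ℝ) (hε : 0 < ε)
    (A : Matrix (Fin d × Fin n) (Fin d × Fin n) ℝ)
    (hA : A = ∑ k ∈ Finset.range (K + 1), (W k)ᵀ ⊗ₖ chebAt L k) :
    l2OpNorm (1 + ε • A) = Real.sqrt (1 + ε ^ 2 * l2OpNorm A ^ 2) ∧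
    1 ≤ l2OpNorm (1 + ε • A) ∧
    l2OpNorm (1 + ε • A) ≤ 1 + ε ^ 2 / 2 * l2OpNorm A ^ 2 := by
  have hnd : Nonempty (Fin d × Fin n) := ⟨⟨⟨0, hd⟩, ⟨0, hn⟩⟩⟩
  -- antisymmetry of A
  have hAT : Aᵀ = -A := by
    subst hA
    rw [Matrix.transpose_sum, ← Finset.sum_neg_distrib]
    apply Finset.sum_congr rfl
    intro k hk
    have hk' : k ≤ K := Nat.lt_succ_iff.mp (Finset.mem_range.mp hk)
    have hcheb : (chebAt L k)ᵀ = chebAt L k := by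
      rw [chebAt, aeval_transpose, hL]
    rw [← Matrix.kroneckerMap_transpose, Matrix.transpose_transpose, hcheb, hW k hk',
      ]
    ext i j
    simp [Matrix.kroneckerMap_apply]
  set T := Matrix.toEuclideanCLM (𝕜 := ℝ) A with hTdef
  have hadj : ContinuousLinearMap.adjoint T = -T := by
    have hstar : star A = -A := by
      rw [Matrix.star_eq_conjTranspose, ← hAT]
      ext i j
      simp [Matrix.conjTranspose_apply]
    rw [← ContinuousLinearMap.star_eq_adjoint, hTdef, ← map_star, hstar, map_neg]
  have hT0 : ∀ x, inner ℝ (T x) x = (0 : ℝ) := by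
    intro x
    have h1 := ContinuousLinearMap.adjoint_inner_left T x x
    rw [hadj] at h1
    simp only [ContinuousLinearMap.neg_apply, inner_neg_left] at h1
    have h2 : (inner ℝ x (T x) : ℝ) = inner ℝ (T x) x := real_inner_comm _ _
    linarith [h1, h2.symm ▸ h1]
  have hmap : Matrix.toEuclideanCLM (𝕜 := ℝ) (1 + ε • A) = 1 + ε • T := by
    rw [map_add, _root_.map_smul]
    norm_num [hTdef]
  have hJ : l2OpNorm (1 + ε • A) = ‖1 + ε • T‖ := by rw [l2OpNorm, hmap]
  have hAn : l2OpNorm A = ‖T‖ := rfl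
  have hmain := op_norm_skew T hT0 ε hε.le
  refine ⟨by rw [hJ, hAn, hmain], ?_, ?_⟩
  · rw [hJ, hmain]
    have : (1:ℝ) = Real.sqrt 1 := (Real.sqrt_one).symm
    rw [this]
    apply Real.sqrt_le_sqrt
    nlinarith [mul_nonneg (sq_nonneg ε) (sq_nonneg ‖T‖)]
  · rw [hJ, hAn, hmain]
    have h2 : Real.sqrt (1 + ε ^ 2 * ‖T‖ ^ 2) ≤ 1 + ε ^ 2 * ‖T‖ ^ 2 / 2 := by
      rw [show (1 + ε ^ 2 * ‖T‖ ^ 2 / 2) = Real.sqrt ((1 + ε ^ 2 * ‖T‖ ^ 2 / 2) ^ 2) by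
        rw [Real.sqrt_sq (by positivity)]]
      apply Real.sqrt_le_sqrt
      nlinarith [sq_nonneg (ε ^ 2 * ‖T‖ ^ 2)]
    linarith [h2]
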